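/- With μ defined by μ(1)=1 and μ(n) = min_{1 ≤ p ≤ n-1} n·μ(p)·μ(n-p), and β(n) = μ(n)·n/2^(2n-2), we have β(n) ≥ 9/8 for every n ≥ 2 that is not a power of two. -/

import Mathlib

/-- `μ(1) = 1` and `μ(n) = min_{1 ≤ p ≤ n-1} n·μ(p)·μ(n-p)` for `n ≥ 2`. -/
def mu : ℕ → ℕ
  | 0 => 1
  | 1 => 1
  | n + 2 =>
    (Finset.Icc 1 (n + 1)).attach.inf'
      (Finset.attach_nonempty_iff.mpr (Finset.nonempty_Icc.mpr (by omega)))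
      (fun p => (n + 2) * mu p.1 * mu (n + 2 - p.1))
decreasing_by
  · have := p.2; simp only [Finset.mem_Icc] at this; omega
  · have := p.2; simp only [Finset.mem_Icc] at this; omega

/-- `β(n) = μ(n)/τ(n) = μ(n)·n/2^(2n-2)`. -/
def beta (n : ℕ) : ℚ := (mu n : ℚ) * n / 2 ^ (2 * n - 2)

lemma mu_spec (n : ℕ) : ∃ p, 1 ≤ p ∧ p ≤ n + 1 ∧ mu (n + 2) = (n + 2) * mu p * mu (n + 2 - p) := by
  rw [mu]
  obtain ⟨a, _, ha⟩ := Finset.exists_mem_eq_inf' (Finset.attach_nonempty_iff.mpr (Finset.nonempty_Icc.mpr (by omega : (1:ℕ) ≤ n+1))) (fun p : {x // x ∈ Finset.Icc 1 (n+1)} => (n + 2) * mu p.1 * mu (n + 2 - p.1))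
  have := a.2
  simp only [Finset.mem_Icc] at this
  exact ⟨a.1, this.1, this.2, ha⟩

/-- Lower-bound target: 1 for powers of two, 9/8 otherwise. -/
noncomputable def L (n : ℕ) : ℚ := if 2 ^ Nat.log 2 n = n then 1 else 9/8

lemma L_ge_one (n : ℕ) : 1 ≤ L n := by unfold L; split <;> norm_num

lemma L_pos (n : ℕ) : 0 < L n := lt_of_lt_of_le one_pos (L_ge_one n)

lemma L_le (n : ℕ) : L n ≤ 9/8 := by unfold L; split <;> norm_num

lemma L_of_not_pow (n : ℕ) (h : ¬ ∃ k : ℕ, n = 2 ^ k) : L n = 9/8 := by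
  unfold L
  rw [if_neg]
  intro hc
  exact h ⟨Nat.log 2 n, hc.symm⟩

lemma pow_of_L (n : ℕ) (h : 2 ^ Nat.log 2 n = n) : ∃ k : ℕ, n = 2 ^ k := ⟨Nat.log 2 n, h.symm⟩

/-- Key combinatorial inequality. -/
lemma key (p q : ℕ) (hp : 1 ≤ p) (hq : 1 ≤ q) :
    4 * (p:ℚ) * q * L (p+q) ≤ ((p:ℚ)+q)^2 * L p * L q := by
  have hp' : (1:ℚ) ≤ p := by exact_mod_cast hp
  have hq' : (1:ℚ) ≤ q := by exact_mod_cast hq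
  have h4 : 4 * (p:ℚ) * q ≤ ((p:ℚ)+q)^2 := by nlinarith [sq_nonneg ((p:ℚ) - q)]
  have hpq0 : (0:ℚ) ≤ 4 * p * q := by positivity
  by_cases hn : 2 ^ Nat.log 2 (p+q) = p + q
  · -- L (p+q) = 1
    have hLn : L (p+q) = 1 := if_pos hn
    rw [hLn, mul_one]
    have h1 : (1:ℚ) ≤ L p * L q := by
      nlinarith [L_ge_one p, L_ge_one q, L_pos p, L_pos q]
    nlinarith [h4, mul_nonneg (sq_nonneg ((p:ℚ)+q)) (sub_nonneg.2 h1)]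
  · have hLn : L (p+q) = 9/8 := if_neg hn
    rw [hLn]
    by_cases hLp : 2 ^ Nat.log 2 p = p
    · by_cases hLq : 2 ^ Nat.log 2 q = q
      · -- both powers of two
        have hLp1 : L p = 1 := if_pos hLp
        have hLq1 : L q = 1 := if_pos hLq
        rw [hLp1, hLq1, mul_one, mul_one]
        set a := Nat.log 2 p
        set b := Nat.log 2 q
        have hab : a ≠ b := by
          intro hab
          apply hn
          have hpq : p = q := by rw [← hLp, ← hLq, hab]
          have : p + q = 2 ^ (a + 1) := by
            rw [hpq, ← hLq, ← hab]; ring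
          rw [this, Nat.log_pow (by norm_num)]
        -- wlog-ish: one of them is at least double the other
        have hdouble : 2 * p ≤ q ∨ 2 * q ≤ p := by
          rcases Nat.lt_or_ge a b with h' | h'
          · left
            calc 2 * p = 2 ^ (a + 1) := by rw [← hLp]; ring
              _ ≤ 2 ^ b := Nat.pow_le_pow_right (by norm_num) (by omega)
              _ = q := hLq
          · have h'' : b < a := by omega
            right
            calc 2 * q = 2 ^ (b + 1) := by rw [← hLq]; ring
              _ ≤ 2 ^ a := Nat.pow_le_pow_right (by norm_num) (by omega)
              _ = p := hLp
        rcases hdouble with hd | hd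
        · have hd' : 2 * (p:ℚ) ≤ q := by exact_mod_cast hd
          nlinarith [mul_nonneg (by linarith : (0:ℚ) ≤ (q:ℚ) - 2*p) (by linarith : (0:ℚ) ≤ 2*(q:ℚ) - p)]
        · have hd' : 2 * (q:ℚ) ≤ p := by exact_mod_cast hd
          nlinarith [mul_nonneg (by linarith : (0:ℚ) ≤ (p:ℚ) - 2*q) (by linarith : (0:ℚ) ≤ 2*(p:ℚ) - q)]
      · -- q not a power of two: L q = 9/8
        have hLq1 : L q = 9/8 := if_neg hLq
        rw [hLq1]
        have h1 : (1:ℚ) ≤ L p := L_ge_one p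
        nlinarith [sq_nonneg ((p:ℚ) - q), mul_nonneg (mul_nonneg hpq0 (by norm_num : (0:ℚ) ≤ 9/8)) (sub_nonneg.mpr h1)]
    · have hLp1 : L p = 9/8 := if_neg hLp
      rw [hLp1]
      have h1 : (1:ℚ) ≤ L q := L_ge_one q
      nlinarith [sq_nonneg ((p:ℚ) - q), mul_nonneg (mul_nonneg hpq0 (by norm_num : (0:ℚ) ≤ 9/8)) (sub_nonneg.mpr h1)]

lemma main : ∀ n : ℕ, 1 ≤ n → L n * 2 ^ (2 * n - 2) ≤ (mu n : ℚ) * n := by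
  intro n
  induction n using Nat.strong_induction_on with
  | _ n ih =>
    intro hn
    match n, hn with
    | 1, _ =>
      have : L 1 = 1 := by unfold L; norm_num
      simp [mu, this]
    | (m+2), _ =>
      obtain ⟨p, hp1, hp2, heq⟩ := mu_spec m
      set n := m + 2 with hndef
      set q := n - p with hqdef
      have hq1 : 1 ≤ q := by omega
      have hpq : p + q = n := by omega
      have IHp := ih p (by omega) hp1
      have IHq := ih q (by omega) hq1
      have hP : (0:ℚ) < p := by exact_mod_cast hp1
      have hQ : (0:ℚ) < q := by exact_mod_cast hq1
      have hkey := key p q hp1 hq1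
      rw [hpq] at hkey
      have hcast : ((p:ℚ) + q) = (n:ℚ) := by exact_mod_cast congrArg (Nat.cast : ℕ → ℚ) hpq
      rw [hcast] at hkey
      have hpow : (2:ℚ) ^ (2 * n - 2) = 4 * 2 ^ (2 * p - 2) * 2 ^ (2 * q - 2) := by
        have he : 2 * n - 2 = (2 * p - 2) + (2 * q - 2) + 2 := by omega
        rw [he, pow_add, pow_add]; ring
      have hmueq : (mu n : ℚ) = (n:ℚ) * mu p * mu q := by
        rw [heq]; push_cast; rfl
      -- goal : L n * 2 ^ (2*n-2) ≤ mu n * n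
      rw [hmueq, hpow]
      have hmup : (0:ℚ) ≤ (mu p : ℚ) := by positivity
      have hmuq : (0:ℚ) ≤ (mu q : ℚ) := by positivity
      have step1 : L p * 2 ^ (2*p-2) * (L q * 2 ^ (2*q-2)) ≤ ((mu p : ℚ) * p) * ((mu q : ℚ) * q) := by
        apply mul_le_mul IHp IHq (mul_nonneg (L_pos q).le (by positivity))
        positivity
      have hpos : (0:ℚ) < (p:ℚ) * q := by positivity
      rw [← mul_le_mul_iff_left₀ hpos]
      calc L n * (4 * 2 ^ (2*p-2) * 2 ^ (2*q-2)) * ((p:ℚ) * q)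
          = (4 * (p:ℚ) * q * L n) * (2 ^ (2*p-2) * 2 ^ (2*q-2)) := by ring
        _ ≤ ((n:ℚ)^2 * L p * L q) * (2 ^ (2*p-2) * 2 ^ (2*q-2)) := by
            apply mul_le_mul_of_nonneg_right hkey (by positivity)
        _ = (n:ℚ)^2 * (L p * 2 ^ (2*p-2) * (L q * 2 ^ (2*q-2))) := by ring
        _ ≤ (n:ℚ)^2 * (((mu p : ℚ) * p) * ((mu q : ℚ) * q)) := by
            apply mul_le_mul_of_nonneg_left step1 (by positivity)
        _ = (n:ℚ) * mu p * mu q * n * ((p:ℚ) * q) := by ring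

/-- `β(n) ≥ 9/8` for every `n ≥ 2` that is not a power of two. -/
theorem stmt_8 (n : ℕ) (hn : 2 ≤ n) (h : ¬ ∃ k : ℕ, n = 2 ^ k) : 9 / 8 ≤ beta n := by
  have hm := main n (by omega)
  rw [L_of_not_pow n h] at hm
  unfold beta
  rw [le_div_iff₀ (by positivity)]
  linarith
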